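/- arXiv:1209.5077 — 4 statements merged into one kernel-verified Lean document; each statement's English description precedes it below -/
import Mathlib

section
/- Let s ∈ ℂ be such that both sI − A and sI − A' are invertible (as complex matrices). Then sI − Ã is invertible and C̃ (sI − Ã)⁻¹ B̃ + D̃ = (C (sI − A)⁻¹ B + D) − (C' (sI − A')⁻¹ B' + D'); that is, the transfer function of the augmented system (Ã, B̃, C̃, D̃) equals the difference G(s) − G'(s) of the transfer functions of the original and reduced systems. -/
open Matrix

/-- The transfer function of the augmented (error) system equals the difference of the
transfer functions of the original and reduced systems: if both `sI − A` and `sI − A'`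
are invertible, then `sI − Ã` is invertible and
`C̃ (sI − Ã)⁻¹ B̃ + D̃ = (C (sI − A)⁻¹ B + D) − (C' (sI − A')⁻¹ B' + D')`. -/
theorem augmented_transfer_function_eq_difference {n n' m o : ℕ}
    (A : Matrix (Fin n) (Fin n) ℝ) (B : Matrix (Fin n) (Fin m) ℝ)
    (C : Matrix (Fin o) (Fin n) ℝ) (D : Matrix (Fin o) (Fin m) ℝ)
    (A' : Matrix (Fin n') (Fin n') ℝ) (B' : Matrix (Fin n') (Fin m) ℝ)
    (C' : Matrix (Fin o) (Fin n') ℝ) (D' : Matrix (Fin o) (Fin m) ℝ)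
    (Atil : Matrix (Fin n ⊕ Fin n') (Fin n ⊕ Fin n') ℝ)
    (Btil : Matrix (Fin n ⊕ Fin n') (Fin m) ℝ)
    (Ctil : Matrix (Fin o) (Fin n ⊕ Fin n') ℝ)
    (Dtil : Matrix (Fin o) (Fin m) ℝ)
    (hA : Atil = fromBlocks A 0 0 A') (hB : Btil = fromRows B B')
    (hC : Ctil = fromCols C (-C')) (hD : Dtil = D - D')
    (s : ℂ)
    (hinv : IsUnit (s • (1 : Matrix (Fin n) (Fin n) ℂ) - A.map (Complex.ofReal ·)))
    (hinv' : IsUnit (s • (1 : Matrix (Fin n') (Fin n') ℂ) - A'.map (Complex.ofReal ·))) :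
    IsUnit (s • (1 : Matrix (Fin n ⊕ Fin n') (Fin n ⊕ Fin n') ℂ)
        - Atil.map (Complex.ofReal ·)) ∧
    (Ctil.map (Complex.ofReal ·)) *
        (s • (1 : Matrix (Fin n ⊕ Fin n') (Fin n ⊕ Fin n') ℂ)
          - Atil.map (Complex.ofReal ·))⁻¹ *
        (Btil.map (Complex.ofReal ·)) + Dtil.map (Complex.ofReal ·)
      = ((C.map (Complex.ofReal ·)) *
            (s • (1 : Matrix (Fin n) (Fin n) ℂ) - A.map (Complex.ofReal ·))⁻¹ *
            (B.map (Complex.ofReal ·)) + D.map (Complex.ofReal ·))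
        - ((C'.map (Complex.ofReal ·)) *
            (s • (1 : Matrix (Fin n') (Fin n') ℂ) - A'.map (Complex.ofReal ·))⁻¹ *
            (B'.map (Complex.ofReal ·)) + D'.map (Complex.ofReal ·)) := by
  set M := s • (1 : Matrix (Fin n) (Fin n) ℂ) - A.map (Complex.ofReal ·) with hM
  set M' := s • (1 : Matrix (Fin n') (Fin n') ℂ) - A'.map (Complex.ofReal ·) with hM'
  have hblock : s • (1 : Matrix (Fin n ⊕ Fin n') (Fin n ⊕ Fin n') ℂ)
      - Atil.map (Complex.ofReal ·) = fromBlocks M 0 0 M' := by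
    subst hA
    ext (i | i) (j | j) <;>
      simp [hM, hM', fromBlocks, one_apply, Matrix.sub_apply, Matrix.smul_apply, apply_ite (s * ·)]
  have hunit : IsUnit (s • (1 : Matrix (Fin n ⊕ Fin n') (Fin n ⊕ Fin n') ℂ)
      - Atil.map (Complex.ofReal ·)) := by
    rw [hblock]
    exact isUnit_fromBlocks_zero₂₁.mpr ⟨hinv, hinv'⟩
  refine ⟨hunit, ?_⟩
  have hinvblock : (s • (1 : Matrix (Fin n ⊕ Fin n') (Fin n ⊕ Fin n') ℂ)
      - Atil.map (Complex.ofReal ·))⁻¹ = fromBlocks M⁻¹ 0 0 M'⁻¹ := by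
    rw [hblock, inv_fromBlocks_zero₂₁_of_isUnit_iff M 0 M' (by simp [hinv, hinv'])]
    simp
  have hBmap : Btil.map (Complex.ofReal ·)
      = fromRows (B.map (Complex.ofReal ·)) (B'.map (Complex.ofReal ·)) := by
    subst hB; ext (i | i) j <;> simp
  have hCmap : Ctil.map (Complex.ofReal ·)
      = fromCols (C.map (Complex.ofReal ·)) (-(C'.map (Complex.ofReal ·))) := by
    subst hC; ext i (j | j) <;> simp
  have hDmap : Dtil.map (Complex.ofReal ·)
      = D.map (Complex.ofReal ·) - D'.map (Complex.ofReal ·) := by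
    subst hD; ext i j <;> simp
  rw [hinvblock, hBmap, hCmap, hDmap, fromCols_mul_fromBlocks, fromCols_mul_fromRows]
  simp only [Matrix.mul_zero, Matrix.zero_mul, add_zero, zero_add, Matrix.neg_mul]
  abel
end

section
/- Let A, P ∈ ℝ^{N×N} with P symmetric positive semidefinite, and let ε > 0. If AᵀP + PA + εI is negative semidefinite, then P is positive definite. -/
open Matrix

/-- If `P` is symmetric positive semidefinite, `ε > 0`, and `AᵀP + PA + εI` is negative
semidefinite, then `P` is positive definite. -/
theorem posDef_of_lyapunov_ineq {N : ℕ}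
    (A P : Matrix (Fin N) (Fin N) ℝ) (hP : P.PosSemidef)
    (ε : ℝ) (hε : 0 < ε)
    (h : (-(Aᵀ * P + P * A + ε • (1 : Matrix (Fin N) (Fin N) ℝ))).PosSemidef) :
    P.PosDef := by
  refine posDef_iff_dotProduct_mulVec.mpr ⟨hP.1, fun x hx => ?_⟩
  rcases lt_or_eq_of_le (hP.dotProduct_mulVec_nonneg x) with hlt | heq
  · exact hlt
  · exfalso
    have hPx : P *ᵥ x = 0 := (hP.dotProduct_mulVec_zero_iff x).mp heq.symm
    have h2 := h.dotProduct_mulVec_nonneg x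
    simp only [star_trivial] at h2 heq hPx
    rw [neg_mulVec, dotProduct_neg, add_mulVec, add_mulVec, dotProduct_add,
      dotProduct_add, smul_mulVec, one_mulVec, dotProduct_smul,
      ← mulVec_mulVec, hPx, mulVec_zero, dotProduct_zero, ← mulVec_mulVec,
      dotProduct_mulVec] at h2
    have hvP : x ᵥ* P = 0 := by
      rw [← hP.1.eq, vecMul_conjTranspose, star_trivial, show P *ᵥ star x = 0 by simpa using hPx]
    rw [hvP, zero_dotProduct] at h2
    have hxx : 0 < x ⬝ᵥ x := by
      have hnn : 0 ≤ x ⬝ᵥ x := Finset.sum_nonneg fun i _ => mul_self_nonneg _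
      rcases hnn.lt_or_eq with h' | h'
      · exact h'
      · exact absurd (dotProduct_self_eq_zero.mp h'.symm) hx
    simp only [smul_eq_mul] at h2
    nlinarith [h2, hxx, hε]
end

section
/- Let A, P ∈ ℝ^{N×N} with P symmetric positive definite. If AᵀP + PA is negative definite, then A is Hurwitz, i.e., every eigenvalue λ ∈ ℂ of A (viewed as a complex matrix) satisfies Re(λ) < 0. -/
open Matrix

private lemma re_quad {N : ℕ} (M : Matrix (Fin N) (Fin N) ℝ) (v : Fin N → ℂ) :
    (star v ⬝ᵥ (M.map (Complex.ofReal ·)).mulVec v).re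
      = (fun i => (v i).re) ⬝ᵥ M.mulVec (fun i => (v i).re)
        + (fun i => (v i).im) ⬝ᵥ M.mulVec (fun i => (v i).im) := by
  simp only [dotProduct, mulVec, Matrix.map_apply, Pi.star_apply, Complex.re_sum,
    Finset.mul_sum, ← Finset.sum_add_distrib]
  refine Finset.sum_congr rfl fun i _ => Finset.sum_congr rfl fun j _ => ?_
  simp [Complex.mul_re, Complex.mul_im]

private lemma re_quad_pos {N : ℕ} {M : Matrix (Fin N) (Fin N) ℝ} (hM : M.PosDef)
    {v : Fin N → ℂ} (hv : v ≠ 0) :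
    0 < (star v ⬝ᵥ (M.map (Complex.ofReal ·)).mulVec v).re := by
  rw [re_quad]
  set x : Fin N → ℝ := fun i => (v i).re
  set y : Fin N → ℝ := fun i => (v i).im
  have hxy : x ≠ 0 ∨ y ≠ 0 := by
    by_contra hc
    push_neg at hc
    exact hv (funext fun i => Complex.ext (congrFun hc.1 i) (congrFun hc.2 i))
  rcases hxy with hx | hy
  · have h1 := hM.dotProduct_mulVec_pos hx
    have h2 := hM.posSemidef.dotProduct_mulVec_nonneg y
    simp only [star_trivial, RCLike.re_to_real] at h1 h2
    linarith
  · have h1 := hM.posSemidef.dotProduct_mulVec_nonneg x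
    have h2 := hM.dotProduct_mulVec_pos hy
    simp only [star_trivial, RCLike.re_to_real] at h1 h2
    linarith

/-- A real square matrix is Hurwitz if every eigenvalue of it, viewed as a complex
matrix, has strictly negative real part. -/
def IsHurwitz {n : Type*} [Fintype n] [DecidableEq n] (A : Matrix n n ℝ) : Prop :=
  ∀ μ ∈ spectrum ℂ (A.map (Complex.ofReal ·)), μ.re < 0

/-- Lyapunov's theorem: if `P` is symmetric positive definite and `AᵀP + PA` is negative
definite, then `A` is Hurwitz. -/
theorem hurwitz_of_lyapunov {N : ℕ}
    (A P : Matrix (Fin N) (Fin N) ℝ) (hP : P.PosDef)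
    (h : (-(Aᵀ * P + P * A)).PosDef) :
    IsHurwitz A := by
  intro μ hμ
  set Ac := A.map (Complex.ofReal ·) with hAcdef
  set Pc := P.map (Complex.ofReal ·) with hPcdef
  -- extract an eigenvector
  have h1 : Module.End.HasEigenvalue (Matrix.toLin' Ac) μ := by
    apply Module.End.HasEigenvalue.of_mem_spectrum
    have := (AlgEquiv.spectrum_eq Matrix.toLinAlgEquiv' Ac).symm ▸ hμ
    exact this
  obtain ⟨v, hv⟩ := h1.exists_hasEigenvector
  have hv0 : v ≠ 0 := hv.right
  have heig : Ac.mulVec v = μ • v := by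
    simpa [Matrix.toLin'_apply] using hv.apply_eq_smul
  -- conjugation fact
  have hconj : Ac *ᵥ star v = star (Ac *ᵥ v) := by
    funext i
    simp [Matrix.mulVec, dotProduct, star_sum, star_mul', Complex.conj_ofReal, hAcdef]
  -- complexification of the Lyapunov matrix
  have hmap : (Aᵀ * P + P * A).map (Complex.ofReal ·) = Acᵀ * Pc + Pc * Ac := by
    have hco : (Complex.ofReal ·) = ⇑Complex.ofRealHom := rfl
    rw [hco, hAcdef, hPcdef, hco]
    simp [Matrix.map_add, Matrix.map_mul, Matrix.transpose_map]
  set c := star v ⬝ᵥ Pc *ᵥ v with hcdef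
  have key : star v ⬝ᵥ ((Aᵀ * P + P * A).map (Complex.ofReal ·)) *ᵥ v
      = ((starRingEnd ℂ) μ + μ) * c := by
    rw [hmap, add_mulVec, dotProduct_add, ← mulVec_mulVec, ← mulVec_mulVec,
      dotProduct_mulVec (star v) Acᵀ, vecMul_transpose, hconj, heig]
    simp only [star_smul, smul_dotProduct, dotProduct_smul, mulVec_smul, hcdef]
    simp [smul_eq_mul]
    ring
  have hneg : ((-(Aᵀ * P + P * A)).map (Complex.ofReal ·))
      = -((Aᵀ * P + P * A).map (Complex.ofReal ·)) := by
    ext i j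
    simp
  have hQ := re_quad_pos h hv0
  rw [hneg] at hQ
  have hcre := re_quad_pos hP hv0
  rw [← hPcdef, ← hcdef] at hcre
  have hμre : ((starRingEnd ℂ) μ + μ) = ((2 * μ.re : ℝ) : ℂ) := by
    rw [add_comm, Complex.add_conj]
  rw [neg_mulVec, dotProduct_neg, key] at hQ
  rw [hμre] at hQ
  simp only [Complex.neg_re, Complex.mul_re, Complex.ofReal_re, Complex.ofReal_im,
    zero_mul, sub_zero] at hQ
  nlinarith
end

section
/- Let γ > 0, let A ∈ ℝ^{N×N}, B ∈ ℝ^{N×m}, C ∈ ℝ^{o×N}, D ∈ ℝ^{o×m}, and let P ∈ ℝ^{N×N} be symmetric. If the symmetric block matrix [[P, AP, B, 0], [PAᵀ, P, 0, PCᵀ], [Bᵀ, 0, I_m, Dᵀ], [0, CP, D, γ²I_o]] is positive definite, then every eigenvalue of A (viewed as a complex matrix) has modulus strictly less than 1, and for every z ∈ ℂ with |z| = 1 the matrix zI − A is invertible and the spectral norm satisfies ‖C (zI − A)⁻¹ B + D‖ ≤ γ. -/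
open Matrix

/-- The operator norm induced by the Euclidean norm (spectral norm) of a complex matrix. -/
noncomputable def specNorm {m n : Type*} [Fintype m] [Fintype n] [DecidableEq n]
    (M : Matrix m n ℂ) : ℝ :=
  ‖(Matrix.toEuclideanLin M).toContinuousLinearMap‖

section Aux


lemma star_sum_elim {a b : Type*} (u : a → ℂ) (v : b → ℂ) :
    star (Sum.elim u v) = Sum.elim (star u) (star v) := by
  funext i; cases i <;> rfl

lemma re_quadform_map {n : Type*} [Fintype n] {M : Matrix n n ℝ} (x : n → ℂ) :
    (star x ⬝ᵥ (M.map (Complex.ofReal ·)) *ᵥ x).re =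
      (fun i => (x i).re) ⬝ᵥ M *ᵥ (fun i => (x i).re) +
      (fun i => (x i).im) ⬝ᵥ M *ᵥ (fun i => (x i).im) := by
  simp only [dotProduct, mulVec, map_apply, Pi.star_apply, RCLike.star_def]
  rw [Complex.re_sum]
  rw [← Finset.sum_add_distrib]
  refine Finset.sum_congr rfl fun i _ => ?_
  simp only [Finset.mul_sum, Complex.re_sum, mul_add, ← Finset.sum_add_distrib]
  refine Finset.sum_congr rfl fun j _ => ?_
  simp [Complex.mul_re, Complex.conj_re, Complex.conj_im]

lemma re_quadform_pos {n : Type*} [Fintype n] [DecidableEq n] {M : Matrix n n ℝ}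
    (hM : M.PosDef) {x : n → ℂ} (hx : x ≠ 0) :
    0 < (star x ⬝ᵥ (M.map (Complex.ofReal ·)) *ᵥ x).re := by
  rw [re_quadform_map]
  set a : n → ℝ := fun i => (x i).re
  set b : n → ℝ := fun i => (x i).im
  have hab : a ≠ 0 ∨ b ≠ 0 := by
    by_contra hc
    push_neg at hc
    apply hx
    funext i
    have h1 : a i = 0 := by rw [hc.1]; rfl
    have h2 : b i = 0 := by rw [hc.2]; rfl
    exact Complex.ext h1 h2
  have hsa : 0 ≤ a ⬝ᵥ M *ᵥ a := by simpa using hM.posSemidef.dotProduct_mulVec_nonneg a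
  have hsb : 0 ≤ b ⬝ᵥ M *ᵥ b := by simpa using hM.posSemidef.dotProduct_mulVec_nonneg b
  rcases hab with ha | hb
  · have := hM.dotProduct_mulVec_pos ha; simp only [star_trivial] at this; linarith
  · have := hM.dotProduct_mulVec_pos hb; simp only [star_trivial] at this; linarith

lemma posDef_fromBlocks₁₁' {l n : Type*} [Fintype l] [Fintype n] [DecidableEq l] [DecidableEq n]
    {A : Matrix l l ℝ} {B : Matrix l n ℝ} {C : Matrix n l ℝ} {D : Matrix n n ℝ}
    (hM : (fromBlocks A B C D).PosDef) : A.PosDef := by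
  refine posDef_iff_dotProduct_mulVec.mpr ⟨((isHermitian_fromBlocks_iff).mp hM.1).1, fun v hv => ?_⟩
  have hne : Sum.elim v (0 : n → ℝ) ≠ 0 := by
    intro hc
    apply hv; funext i
    exact congrFun hc (Sum.inl i)
  have := hM.dotProduct_mulVec_pos hne
  simpa [fromBlocks_mulVec, sumElim_dotProduct_sumElim] using this

lemma quadform16 {n1 n2 n3 n4 : Type*} [Fintype n1] [Fintype n2] [Fintype n3] [Fintype n4]
    (M11 : Matrix n1 n1 ℂ) (M12 : Matrix n1 n2 ℂ) (M13 : Matrix n1 n3 ℂ) (M14 : Matrix n1 n4 ℂ)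
    (M21 : Matrix n2 n1 ℂ) (M22 : Matrix n2 n2 ℂ) (M23 : Matrix n2 n3 ℂ) (M24 : Matrix n2 n4 ℂ)
    (M31 : Matrix n3 n1 ℂ) (M32 : Matrix n3 n2 ℂ) (M33 : Matrix n3 n3 ℂ) (M34 : Matrix n3 n4 ℂ)
    (M41 : Matrix n4 n1 ℂ) (M42 : Matrix n4 n2 ℂ) (M43 : Matrix n4 n3 ℂ) (M44 : Matrix n4 n4 ℂ)
    (x1 : n1 → ℂ) (x2 : n2 → ℂ) (x3 : n3 → ℂ) (x4 : n4 → ℂ) :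
    star (Sum.elim (Sum.elim x1 x2) (Sum.elim x3 x4)) ⬝ᵥ
      (fromBlocks (fromBlocks M11 M12 M21 M22) (fromBlocks M13 M14 M23 M24)
        (fromBlocks M31 M32 M41 M42) (fromBlocks M33 M34 M43 M44)) *ᵥ
      (Sum.elim (Sum.elim x1 x2) (Sum.elim x3 x4)) =
    (star x1 ⬝ᵥ M11 *ᵥ x1 + star x1 ⬝ᵥ M12 *ᵥ x2 + star x1 ⬝ᵥ M13 *ᵥ x3 + star x1 ⬝ᵥ M14 *ᵥ x4) +
    (star x2 ⬝ᵥ M21 *ᵥ x1 + star x2 ⬝ᵥ M22 *ᵥ x2 + star x2 ⬝ᵥ M23 *ᵥ x3 + star x2 ⬝ᵥ M24 *ᵥ x4) +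
    (star x3 ⬝ᵥ M31 *ᵥ x1 + star x3 ⬝ᵥ M32 *ᵥ x2 + star x3 ⬝ᵥ M33 *ᵥ x3 + star x3 ⬝ᵥ M34 *ᵥ x4) +
    (star x4 ⬝ᵥ M41 *ᵥ x1 + star x4 ⬝ᵥ M42 *ᵥ x2 + star x4 ⬝ᵥ M43 *ᵥ x3 + star x4 ⬝ᵥ M44 *ᵥ x4) := by
  simp only [star_sum_elim, fromBlocks_mulVec, sumElim_dotProduct_sumElim, dotProduct_add,
    Sum.elim_comp_inl, Sum.elim_comp_inr]
  ring

lemma map_transpose_ofReal {a b : Type*} (M : Matrix a b ℝ) :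
    Mᵀ.map (Complex.ofReal ·) = (M.map (Complex.ofReal ·))ᴴ := by
  ext i j; simp [conjTranspose_apply, Complex.conj_ofReal]

lemma map_mul_ofReal {a b c : Type*} [Fintype b] (M : Matrix a b ℝ) (N : Matrix b c ℝ) :
    (M * N).map (Complex.ofReal ·) = M.map (Complex.ofReal ·) * N.map (Complex.ofReal ·) := by
  ext i j; simp [Matrix.mul_apply]

lemma map_one_ofReal {a : Type*} [Fintype a] [DecidableEq a] :
    (1 : Matrix a a ℝ).map (Complex.ofReal ·) = 1 := by
  ext i j; simp [Matrix.one_apply]; split <;> simp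

lemma map_smul_one_ofReal {a : Type*} [Fintype a] [DecidableEq a] (r : ℝ) :
    (r • (1 : Matrix a a ℝ)).map (Complex.ofReal ·) = (r : ℂ) • 1 := by
  ext i j; simp [Matrix.one_apply]; split <;> simp

lemma map_zero_ofReal {a b : Type*} :
    (0 : Matrix a b ℝ).map (Complex.ofReal ·) = 0 := by
  ext i j; simp

lemma euclid_norm_sq {ι : Type*} [Fintype ι] (v : EuclideanSpace ℂ ι) :
    ‖v‖ ^ 2 = (star ((WithLp.equiv 2 (ι → ℂ)) v) ⬝ᵥ ((WithLp.equiv 2 (ι → ℂ)) v)).re := by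
  rw [EuclideanSpace.norm_eq, Real.sq_sqrt (by positivity)]
  simp only [dotProduct, Pi.star_apply, Complex.re_sum]
  refine Finset.sum_congr rfl fun i _ => ?_
  simp [Complex.mul_re, Complex.sq_norm, Complex.normSq_apply]

end Aux

/-- Discrete-time bounded real lemma (sufficiency): if `P` is symmetric and the 4×4
block matrix `[[P, AP, B, 0], [PAᵀ, P, 0, PCᵀ], [Bᵀ, 0, I, Dᵀ], [0, CP, D, γ²I]]` is
positive definite, then every eigenvalue of `A` has modulus `< 1`, and for every `z` on
the unit circle the matrix `zI − A` is invertible with `‖C (zI − A)⁻¹ B + D‖ ≤ γ`. -/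
theorem discrete_hinf_bound_of_lmi {N m o : ℕ} (γ : ℝ) (hγ : 0 < γ)
    (A : Matrix (Fin N) (Fin N) ℝ) (B : Matrix (Fin N) (Fin m) ℝ)
    (C : Matrix (Fin o) (Fin N) ℝ) (D : Matrix (Fin o) (Fin m) ℝ)
    (P : Matrix (Fin N) (Fin N) ℝ) (hPsymm : Pᵀ = P)
    (h : (fromBlocks
        (fromBlocks P (A * P) (P * Aᵀ) P)
        (fromBlocks B 0 0 (P * Cᵀ))
        (fromBlocks Bᵀ 0 0 (C * P))
        (fromBlocks (1 : Matrix (Fin m) (Fin m) ℝ) Dᵀ D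
          (γ ^ 2 • (1 : Matrix (Fin o) (Fin o) ℝ)))).PosDef) :
    (∀ μ ∈ spectrum ℂ (A.map (Complex.ofReal ·)), ‖μ‖ < 1) ∧
    (∀ z : ℂ, ‖z‖ = 1 →
      IsUnit (z • (1 : Matrix (Fin N) (Fin N) ℂ) - A.map (Complex.ofReal ·)) ∧
      specNorm ((C.map (Complex.ofReal ·)) *
          (z • (1 : Matrix (Fin N) (Fin N) ℂ) - A.map (Complex.ofReal ·))⁻¹ *
          (B.map (Complex.ofReal ·)) + D.map (Complex.ofReal ·)) ≤ γ) := by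
  set A' := A.map (Complex.ofReal ·) with hA'
  set B' := B.map (Complex.ofReal ·) with hB'
  set C' := C.map (Complex.ofReal ·) with hC'
  set D' := D.map (Complex.ofReal ·) with hD'
  set P' := P.map (Complex.ofReal ·) with hP'
  have hP : P.PosDef := posDef_fromBlocks₁₁' (posDef_fromBlocks₁₁' h)
  have hPdet : IsUnit P.det := (Matrix.isUnit_iff_isUnit_det _).mp hP.isUnit
  set Q : Matrix (Fin N) (Fin N) ℂ := (P⁻¹).map (Complex.ofReal ·) with hQ
  have hPQ : P' * Q = 1 := by
    rw [hP', hQ, ← map_mul_ofReal, Matrix.mul_nonsing_inv _ hPdet, map_one_ofReal]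
  have hPH : P'ᴴ = P' := by rw [hP', ← map_transpose_ofReal, hPsymm]
  -- the big complex matrix
  set Mc := (fromBlocks
        (fromBlocks P (A * P) (P * Aᵀ) P)
        (fromBlocks B 0 0 (P * Cᵀ))
        (fromBlocks Bᵀ 0 0 (C * P))
        (fromBlocks (1 : Matrix (Fin m) (Fin m) ℝ) Dᵀ D
          (γ ^ 2 • (1 : Matrix (Fin o) (Fin o) ℝ)))).map (Complex.ofReal ·) with hMcdef
  have hMc : Mc = fromBlocks
      (fromBlocks P' (A' * P') (P' * A'ᴴ) P')
      (fromBlocks B' 0 0 (P' * C'ᴴ))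
      (fromBlocks B'ᴴ 0 0 (C' * P'))
      (fromBlocks 1 D'ᴴ D' (((γ : ℂ) ^ 2) • 1)) := by
    rw [hMcdef]
    rw [fromBlocks_map, fromBlocks_map, fromBlocks_map, fromBlocks_map, fromBlocks_map]
    rw [map_mul_ofReal, map_mul_ofReal, map_mul_ofReal, map_mul_ofReal]
    rw [map_transpose_ofReal A, map_transpose_ofReal C, map_transpose_ofReal B,
      map_transpose_ofReal D, map_one_ofReal]
    rw [show ((γ ^ 2 : ℝ) • (1 : Matrix (Fin o) (Fin o) ℝ)).map (Complex.ofReal ·)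
        = ((γ : ℂ) ^ 2) • 1 by rw [map_smul_one_ofReal]; push_cast; ring_nf]
    rw [map_zero_ofReal, map_zero_ofReal, map_zero_ofReal, map_zero_ofReal]
  -- the master quadratic form computation
  have hquad : ∀ (z c : ℂ), (starRingEnd ℂ) c = c → ∀ (q : Fin N → ℂ) (w : Fin m → ℂ),
      A' *ᵥ (P' *ᵥ q) + B' *ᵥ w = z • (P' *ᵥ q) →
      star (Sum.elim (Sum.elim ((-z) • q) q)
          (Sum.elim w (c • (C' *ᵥ (P' *ᵥ q) + D' *ᵥ w)))) ⬝ᵥ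
        Mc *ᵥ (Sum.elim (Sum.elim ((-z) • q) q)
          (Sum.elim w (c • (C' *ᵥ (P' *ᵥ q) + D' *ᵥ w)))) =
      (1 - (starRingEnd ℂ) z * z) * (star q ⬝ᵥ P' *ᵥ q) + star w ⬝ᵥ w
        + (2 * c + (γ : ℂ) ^ 2 * c ^ 2) *
          (star (C' *ᵥ (P' *ᵥ q) + D' *ᵥ w) ⬝ᵥ (C' *ᵥ (P' *ᵥ q) + D' *ᵥ w)) := by
    intro z c hc q w hstep
    set x := P' *ᵥ q with hx
    set y := C' *ᵥ x + D' *ᵥ w with hy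
    rw [hMc, quadform16]
    -- kill zero blocks and normalize scalar multiples
    simp only [zero_mulVec, dotProduct_zero, star_smul, smul_dotProduct, mulVec_smul,
      smul_mulVec, one_mulVec, smul_eq_mul, RCLike.star_def, map_neg, smul_smul,
      dotProduct_smul, dotProduct_neg, neg_dotProduct, smul_zero, mulVec_zero, mul_neg,
      neg_mul, neg_neg, star_neg, smul_neg]
    -- fact: star q ᵥ* P' = star x
    have hsq : star x = star q ᵥ* P' := by
      rw [hx, star_mulVec, hPH]
    have fact1 : ∀ v : Fin o → ℂ, star q ⬝ᵥ (P' * C'ᴴ) *ᵥ v = star (C' *ᵥ x) ⬝ᵥ v := by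
      intro v
      rw [← mulVec_mulVec, dotProduct_mulVec, ← hsq, dotProduct_mulVec, ← star_mulVec]
    have fact2 : ∀ v : Fin N → ℂ, star q ⬝ᵥ (P' * A'ᴴ) *ᵥ v = star (A' *ᵥ x) ⬝ᵥ v := by
      intro v
      rw [← mulVec_mulVec, dotProduct_mulVec, ← hsq, dotProduct_mulVec, ← star_mulVec]
    have fact3 : ∀ v : Fin N → ℂ, star w ⬝ᵥ B'ᴴ *ᵥ v = star (B' *ᵥ w) ⬝ᵥ v := by
      intro v
      rw [dotProduct_mulVec, ← star_mulVec]
    have fact4 : ∀ v : Fin o → ℂ, star w ⬝ᵥ D'ᴴ *ᵥ v = star (D' *ᵥ w) ⬝ᵥ v := by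
      intro v
      rw [dotProduct_mulVec, ← star_mulVec]
    have fact5 : ∀ v : Fin N → ℂ, star q ⬝ᵥ (A' * P') *ᵥ v = star q ⬝ᵥ A' *ᵥ (P' *ᵥ v) := by
      intro v; rw [← mulVec_mulVec]
    have fact6 : ∀ v : Fin N → ℂ, star y ⬝ᵥ (C' * P') *ᵥ v = star y ⬝ᵥ C' *ᵥ (P' *ᵥ v) := by
      intro v; rw [← mulVec_mulVec]
    rw [fact1, fact2, fact3, fact4, fact5, fact6]
    -- combination identities
    have hs1213 : star q ⬝ᵥ A' *ᵥ x + star q ⬝ᵥ B' *ᵥ w = z * (star q ⬝ᵥ x) := by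
      rw [← dotProduct_add, hstep, dotProduct_smul, smul_eq_mul]
    have hs2131 : star (A' *ᵥ x) ⬝ᵥ q + star (B' *ᵥ w) ⬝ᵥ q
        = (starRingEnd ℂ) z * (star x ⬝ᵥ q) := by
      rw [← add_dotProduct, ← star_add, hstep, star_smul, smul_dotProduct]
      simp [smul_eq_mul]
    have hs2434 : star (C' *ᵥ x) ⬝ᵥ y + star (D' *ᵥ w) ⬝ᵥ y = star y ⬝ᵥ y := by
      rw [← add_dotProduct, ← star_add, ← hy]
    have hs4243 : star y ⬝ᵥ C' *ᵥ x + star y ⬝ᵥ D' *ᵥ w = star y ⬝ᵥ y := by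
      rw [← dotProduct_add, ← hy]
    have hsym : star q ⬝ᵥ x = star x ⬝ᵥ q := by
      rw [hsq, ← dotProduct_mulVec, ← hx]
    have hPq : star q ⬝ᵥ P' *ᵥ q = star q ⬝ᵥ x := by rw [← hx]
    rw [hPq]
    linear_combination (-(starRingEnd ℂ) z) * hs1213 + (-z) * hs2131 + c * hs2434
      + ((starRingEnd ℂ) c) * hs4243 + (star y ⬝ᵥ y * (1 + (γ:ℂ)^2 * c)) * hc
      + (z * (starRingEnd ℂ) z) * hsym
  -- eigenvalue bound
  have heig : ∀ (μ : ℂ) (v : Fin N → ℂ), v ≠ 0 → A' *ᵥ v = μ • v → ‖μ‖ < 1 := by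
    intro μ v hv hAv
    have hq : P' *ᵥ (Q *ᵥ v) = v := by rw [mulVec_mulVec, hPQ, one_mulVec]
    set q : Fin N → ℂ := Q *ᵥ v with hqdef
    have hqn : q ≠ 0 := by
      intro h0
      apply hv
      rw [← hq, h0, mulVec_zero]
    have hstep : A' *ᵥ (P' *ᵥ q) + B' *ᵥ (0 : Fin m → ℂ) = μ • (P' *ᵥ q) := by
      rw [hq, mulVec_zero, add_zero, hAv]
    have E := hquad μ 0 (by simp) q 0 hstep
    set ξ := Sum.elim (Sum.elim ((-μ) • q) q)
        (Sum.elim (0 : Fin m → ℂ)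
          ((0:ℂ) • (C' *ᵥ (P' *ᵥ q) + D' *ᵥ (0 : Fin m → ℂ)))) with hξdef
    have hξ : ξ ≠ 0 := by
      intro h0
      apply hqn
      funext i
      exact congrFun h0 (Sum.inl (Sum.inr i))
    have hpos := re_quadform_pos h hξ
    rw [← hMcdef] at hpos
    rw [hξdef] at hpos
    rw [E] at hpos
    simp only [star_zero, dotProduct_zero, zero_dotProduct, mul_zero, zero_mul, add_zero,
      zero_pow, ne_eq, OfNat.ofNat_ne_zero, not_false_iff, two_ne_zero] at hpos
    rw [← Complex.normSq_eq_conj_mul_self] at hpos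
    rw [show (1 - ((Complex.normSq μ : ℝ) : ℂ)) = (((1 - Complex.normSq μ : ℝ)) : ℂ) by
      push_cast; ring] at hpos
    rw [Complex.re_ofReal_mul] at hpos
    have hpre : 0 < (star q ⬝ᵥ P' *ᵥ q).re := by
      have := re_quadform_pos hP hqn
      rw [← hP'] at this
      exact this
    have h1 : Complex.normSq μ < 1 := by nlinarith
    have h2 : ‖μ‖ ^ 2 = Complex.normSq μ := Complex.sq_norm μ
    nlinarith [norm_nonneg μ]
  -- Part 1: spectrum bound
  have part1 : ∀ μ ∈ spectrum ℂ A', ‖μ‖ < 1 := by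
    intro μ hμ
    rw [spectrum.mem_iff] at hμ
    have hdet : (algebraMap ℂ (Matrix (Fin N) (Fin N) ℂ) μ - A').det = 0 := by
      by_contra hd
      exact hμ ((Matrix.isUnit_iff_isUnit_det _).mpr (isUnit_iff_ne_zero.mpr hd))
    obtain ⟨v, hv, hMv⟩ := (Matrix.exists_mulVec_eq_zero_iff).mpr hdet
    apply heig μ v hv
    rw [Algebra.algebraMap_eq_smul_one, sub_mulVec, smul_mulVec, one_mulVec] at hMv
    have := sub_eq_zero.mp hMv
    rw [← this]
  -- Part 2
  refine ⟨part1, fun z hz => ?_⟩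
  have hu : IsUnit (z • (1 : Matrix (Fin N) (Fin N) ℂ) - A') := by
    by_contra hnu
    have hdet : (z • (1 : Matrix (Fin N) (Fin N) ℂ) - A').det = 0 := by
      by_contra hd
      exact hnu ((Matrix.isUnit_iff_isUnit_det _).mpr (isUnit_iff_ne_zero.mpr hd))
    obtain ⟨v, hv, hMv⟩ := (Matrix.exists_mulVec_eq_zero_iff).mpr hdet
    rw [sub_mulVec, smul_mulVec, one_mulVec] at hMv
    have hav : A' *ᵥ v = z • v := (sub_eq_zero.mp hMv).symm
    have := heig z v hv hav
    rw [hz] at this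
    exact lt_irrefl 1 this
  refine ⟨hu, ?_⟩
  set R := z • (1 : Matrix (Fin N) (Fin N) ℂ) - A' with hR
  have hdetR : IsUnit R.det := (Matrix.isUnit_iff_isUnit_det _).mp hu
  set T := C' * R⁻¹ * B' + D' with hT
  -- the core bound on the quadratic form
  have hzz : (starRingEnd ℂ) z * z = 1 := by
    rw [← Complex.normSq_eq_conj_mul_self]
    rw [Complex.normSq_eq_norm_sq, hz]
    norm_num
  set c : ℂ := -(((γ : ℂ) ^ 2)⁻¹) with hcdef
  have hγc : ((γ : ℂ) ^ 2) ≠ 0 := by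
    simp only [ne_eq, pow_eq_zero_iff, Complex.ofReal_eq_zero, OfNat.ofNat_ne_zero,
      not_false_iff, and_true]
    exact hγ.ne'
  have hcconj : (starRingEnd ℂ) c = c := by
    rw [hcdef]
    simp [Complex.conj_ofReal]
  have hcoef : 2 * c + (γ : ℂ) ^ 2 * c ^ 2 = -(((γ : ℂ) ^ 2)⁻¹) := by
    rw [hcdef]
    field_simp
    ring
  have hTw : ∀ w : Fin m → ℂ,
      (star (T *ᵥ w) ⬝ᵥ (T *ᵥ w)).re ≤ γ ^ 2 * (star w ⬝ᵥ w).re := by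
    intro w
    rcases eq_or_ne w 0 with rfl | hw
    · simp [mulVec_zero]
    · set x := R⁻¹ *ᵥ (B' *ᵥ w) with hxdef
      have hq : P' *ᵥ (Q *ᵥ x) = x := by rw [mulVec_mulVec, hPQ, one_mulVec]
      set q : Fin N → ℂ := Q *ᵥ x with hqdef
      have hRx : R *ᵥ x = B' *ᵥ w := by
        rw [hxdef, mulVec_mulVec, Matrix.mul_nonsing_inv _ hdetR, one_mulVec]
      have hstep : A' *ᵥ (P' *ᵥ q) + B' *ᵥ w = z • (P' *ᵥ q) := by
        rw [hq]
        rw [hR, sub_mulVec, smul_mulVec, one_mulVec] at hRx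
        rw [← hRx]
        abel
      have hyT : T *ᵥ w = C' *ᵥ (P' *ᵥ q) + D' *ᵥ w := by
        rw [hq, hT, add_mulVec, ← mulVec_mulVec, ← mulVec_mulVec, ← hxdef]
      have E := hquad z c hcconj q w hstep
      set ξ := Sum.elim (Sum.elim ((-z) • q) q)
          (Sum.elim w (c • (C' *ᵥ (P' *ᵥ q) + D' *ᵥ w))) with hξdef
      have hξ : ξ ≠ 0 := by
        intro h0
        apply hw
        funext i
        exact congrFun h0 (Sum.inr (Sum.inl i))
      have hpos := re_quadform_pos h hξ
      rw [← hMcdef, hξdef, E, hzz] at hpos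
      rw [hcoef, ← hyT] at hpos
      simp only [sub_self, zero_mul, zero_add] at hpos
      rw [show (star w ⬝ᵥ w + -(((γ:ℂ)^2)⁻¹) * (star (T *ᵥ w) ⬝ᵥ (T *ᵥ w)))
          = (star w ⬝ᵥ w - (((γ^2)⁻¹ : ℝ) : ℂ) * (star (T *ᵥ w) ⬝ᵥ (T *ᵥ w))) by
        push_cast; ring] at hpos
      rw [Complex.sub_re, Complex.re_ofReal_mul] at hpos
      have hγ2 : (0:ℝ) < γ ^ 2 := by positivity
      have h1 : (γ^2)⁻¹ * (star (T *ᵥ w) ⬝ᵥ (T *ᵥ w)).re < (star w ⬝ᵥ w).re := by linarith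
      calc (star (T *ᵥ w) ⬝ᵥ (T *ᵥ w)).re
          = γ ^ 2 * ((γ^2)⁻¹ * (star (T *ᵥ w) ⬝ᵥ (T *ᵥ w)).re) := by
            rw [← mul_assoc, mul_inv_cancel₀ hγ2.ne', one_mul]
        _ ≤ γ ^ 2 * (star w ⬝ᵥ w).re := mul_le_mul_of_nonneg_left h1.le hγ2.le
  -- conclude the operator norm bound
  show specNorm T ≤ γ
  rw [specNorm]
  apply ContinuousLinearMap.opNorm_le_bound _ hγ.le
  intro w
  have hLw : (Matrix.toEuclideanLin T).toContinuousLinearMap w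
      = (WithLp.equiv 2 ((Fin o) → ℂ)).symm (T *ᵥ ((WithLp.equiv 2 ((Fin m) → ℂ)) w)) := by
    rfl
  have hsq : ‖(Matrix.toEuclideanLin T).toContinuousLinearMap w‖ ^ 2 ≤ (γ * ‖w‖) ^ 2 := by
    rw [hLw, euclid_norm_sq, mul_pow]
    have hww := euclid_norm_sq w
    rw [hww]
    simp only [Equiv.apply_symm_apply]
    exact hTw ((WithLp.equiv 2 ((Fin m) → ℂ)) w)
  have h1 := Real.sqrt_le_sqrt hsq
  rwa [Real.sqrt_sq (norm_nonneg _), Real.sqrt_sq (by positivity : (0:ℝ) ≤ γ * ‖w‖)] at h1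
end
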